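/- For all a, b, μ ≥ 0 with a ≤ b, and c ≥ 1, one has ψ(c·a, μ) ≤ ψ(c, μ)·ψ(b, μ); in particular if y ≥ 0 and β, T ≥ 0 then ψ(e^{βT}·y, μ) ≤ ψ(e^{βT}, μ)·ψ(y, μ). -/
import Mathlib

noncomputable def psi (x μ : ℝ) : ℝ := x * Real.exp (μ * Real.sqrt (2 * Real.log (1 + x)))

lemma sqrt_add_le' (x y : ℝ) (hx : 0 ≤ x) (hy : 0 ≤ y) :
    Real.sqrt (x + y) ≤ Real.sqrt x + Real.sqrt y := by
  have h : x + y ≤ (Real.sqrt x + Real.sqrt y) ^ 2 := by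
    nlinarith [Real.sq_sqrt hx, Real.sq_sqrt hy, Real.sqrt_nonneg x, Real.sqrt_nonneg y]
  calc Real.sqrt (x + y) ≤ Real.sqrt ((Real.sqrt x + Real.sqrt y) ^ 2) := Real.sqrt_le_sqrt h
    _ = Real.sqrt x + Real.sqrt y := Real.sqrt_sq (by positivity)

lemma psi_main (a b c μ : ℝ) (ha : 0 ≤ a) (hab : a ≤ b) (hμ : 0 ≤ μ) (hc : 1 ≤ c) :
    psi (c * a) μ ≤ psi c μ * psi b μ := by
  have hb : 0 ≤ b := ha.trans hab
  have hc0 : 0 ≤ c := by linarith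
  have hlca : 0 ≤ Real.log (1 + c * a) := Real.log_nonneg (by nlinarith)
  have hlc : 0 ≤ Real.log (1 + c) := Real.log_nonneg (by linarith)
  have hlb : 0 ≤ Real.log (1 + b) := Real.log_nonneg (by linarith)
  have hlog : Real.log (1 + c * a) ≤ Real.log (1 + c) + Real.log (1 + b) := by
    rw [← Real.log_mul (by linarith) (by linarith)]
    exact Real.log_le_log (by nlinarith) (by nlinarith)
  have hsqrt : Real.sqrt (2 * Real.log (1 + c * a))
      ≤ Real.sqrt (2 * Real.log (1 + c)) + Real.sqrt (2 * Real.log (1 + b)) := by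
    calc Real.sqrt (2 * Real.log (1 + c * a))
        ≤ Real.sqrt (2 * Real.log (1 + c) + 2 * Real.log (1 + b)) :=
          Real.sqrt_le_sqrt (by linarith)
      _ ≤ _ := sqrt_add_le' _ _ (by linarith) (by linarith)
  have hexp : Real.exp (μ * Real.sqrt (2 * Real.log (1 + c * a)))
      ≤ Real.exp (μ * Real.sqrt (2 * Real.log (1 + c))) *
        Real.exp (μ * Real.sqrt (2 * Real.log (1 + b))) := by
    rw [← Real.exp_add]
    exact Real.exp_le_exp.2 (by nlinarith)
  unfold psi
  have h1 : c * a ≤ c * b := by nlinarith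
  calc c * a * Real.exp (μ * Real.sqrt (2 * Real.log (1 + c * a)))
      ≤ c * b * (Real.exp (μ * Real.sqrt (2 * Real.log (1 + c))) *
        Real.exp (μ * Real.sqrt (2 * Real.log (1 + b)))) := by
        apply mul_le_mul h1 hexp (Real.exp_pos _).le (by nlinarith)
    _ = c * Real.exp (μ * Real.sqrt (2 * Real.log (1 + c))) *
        (b * Real.exp (μ * Real.sqrt (2 * Real.log (1 + b)))) := by ring

theorem psi_mul_le_of_le :
    (∀ a b c μ : ℝ, 0 ≤ a → a ≤ b → 0 ≤ μ → 1 ≤ c →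
        psi (c * a) μ ≤ psi c μ * psi b μ) ∧
    (∀ y β T μ : ℝ, 0 ≤ y → 0 ≤ β → 0 ≤ T → 0 ≤ μ →
        psi (Real.exp (β * T) * y) μ ≤ psi (Real.exp (β * T)) μ * psi y μ) := by
  constructor
  · exact fun a b c μ ha hab hμ hc => psi_main a b c μ ha hab hμ hc
  · intro y β T μ hy hβ hT hμ
    exact psi_main y y _ μ hy le_rfl hμ (Real.one_le_exp (by positivity))
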